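/- For m ≥ 1 let µ^w_m = µ^w(0̂, 1̂) computed in the partition lattice Π_m (so µ^w_1 = 1), and define the linear operator Δ on R[x] by Δp = Σ_{k ≥ 1} (µ^w_k / k!) · D^k p, where D is formal differentiation (the sum is finite on each polynomial). Then the zeta-type enumerators form the basic sequence of Δ: a_n(0; w) = 0 for every n ≥ 1, and Δ(a_n(x; w)) = n · a_{n−1}(x; w) for every n ≥ 1. -/

import Mathlib

open Finset

variable {R : Type*} [CommRing R] [Algebra ℚ R]

/-- The zeta-type weight `w(0̂, π) = ∏_{B a block of π} w(|B|)`. -/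
noncomputable def zetaWeight (w : ℕ → R) {n : ℕ} (π : Finpartition (univ : Finset (Fin n))) : R :=
  ∏ B ∈ π.parts, w B.card

/-- The zeta-type enumerator `a_n(x; w)` as a polynomial. -/
noncomputable def aPoly (w : ℕ → R) (n : ℕ) : Polynomial R :=
  if n = 0 then 1 else
    ∑ π : Finpartition (univ : Finset (Fin n)),
      Polynomial.C (zetaWeight w π) * Polynomial.X ^ π.parts.card

/-- The zeta-type function `w(τ, σ) = ∏_{B a block of σ} w(#{blocks of τ contained in B})`. -/
noncomputable def zetaRel (w : ℕ → R) {n : ℕ}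
    (τ σ : Finpartition (univ : Finset (Fin n))) : R :=
  ∏ B ∈ σ.parts, w ((τ.parts.filter fun A => A ⊆ B).card)

open scoped Classical in
/-- The Möbius-type function: `µ^w(π, π) = 1` and
`µ^w(π, σ) = -∑_{π ≤ τ < σ} µ^w(π, τ) w(τ, σ)` for `π < σ`. -/
noncomputable def muW (w : ℕ → R) {n : ℕ} (π : Finpartition (univ : Finset (Fin n)))
    (σ : Finpartition (univ : Finset (Fin n))) : R :=
  if π = σ then 1
  else -∑ τ ∈ (Finset.univ.filter fun τ => π ≤ τ ∧ τ < σ).attach,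
        muW w π τ.1 * zetaRel w τ.1 σ
termination_by (Finset.univ.filter fun τ => τ < σ).card
decreasing_by
  classical
  obtain ⟨-, hτσ⟩ := (Finset.mem_filter.mp τ.2).2
  apply Finset.card_lt_card
  constructor
  · intro x hx
    simp only [Finset.mem_filter, Finset.mem_univ, true_and] at hx ⊢
    exact hx.trans hτσ
  · intro hsub
    have hτ : τ.1 ∈ Finset.univ.filter fun x => x < σ := by simp [hτσ]
    have := hsub hτ
    simp at this

/-- `µ^w_m = µ^w(0̂, 1̂)` computed in the partition lattice `Π_m` (for `m ≥ 1`);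
in particular `µ^w_1 = 1`. -/
noncomputable def muTop (w : ℕ → R) : ℕ → R
  | 0 => 1
  | (m + 1) =>
      muW w ⊥ (Finpartition.indiscrete
        (by simp [Finset.bot_eq_empty, ← Finset.nonempty_iff_ne_empty] :
          (univ : Finset (Fin (m + 1))) ≠ ⊥))

/-- The operator `p ↦ ∑_{k ≥ 1} (c k / k!) D^k p` on `R[x]`, where `D` is formal
differentiation; the sum is finite on each polynomial since `D^k p = 0` for
`k > deg p`. -/
noncomputable def opOf (c : ℕ → R) (p : Polynomial R) : Polynomial R :=
  ∑ k ∈ Finset.Icc 1 p.natDegree,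
    (algebraMap ℚ R (1 / k.factorial) * c k) • (Polynomial.derivative^[k] p)

section Transport
open Finset
variable {α β : Type*} [DecidableEq α] [DecidableEq β]

/-- Push a finpartition forward along an injective map. -/
noncomputable def Finpartition.mapInj {s : Finset α} (π : Finpartition s) (f : α → β)
    (hf : Function.Injective f) : Finpartition (s.image f) where
  parts := π.parts.image (Finset.image f)
  supIndep := by
    rw [Finset.supIndep_iff_pairwiseDisjoint]
    rintro _ h1 _ h2 hne
    simp only [Finset.coe_image, Set.mem_image, Finset.mem_coe] at h1 h2
    obtain ⟨A, hA, rfl⟩ := h1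
    obtain ⟨B, hB, rfl⟩ := h2
    have hAB : A ≠ B := fun h => hne (by rw [h])
    have := π.disjoint hA hB hAB
    simpa [Function.onFun, Finset.disjoint_image hf] using this
  sup_parts := by
    ext x
    simp only [Finset.mem_sup, Finset.mem_image, id_eq]
    constructor
    · rintro ⟨B, hB, hx⟩
      obtain ⟨A, hA, rfl⟩ := hB
      simp only [Finset.mem_image] at hx
      obtain ⟨a, ha, rfl⟩ := hx
      exact ⟨a, π.le hA ha, rfl⟩
    · rintro ⟨a, ha, rfl⟩
      obtain ⟨A, hA, haA⟩ := π.exists_mem ha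
      exact ⟨A.image f, ⟨A, hA, rfl⟩, Finset.mem_image_of_mem f haA⟩
  bot_notMem := by
    simp only [Finset.bot_eq_empty, Finset.mem_image]
    rintro ⟨A, hA, h⟩
    rw [Finset.image_eq_empty] at h
    exact π.bot_notMem (by rw [Finset.bot_eq_empty, ← h]; exact hA)

@[simp] lemma Finpartition.mapInj_parts {s : Finset α} (π : Finpartition s) (f : α → β)
    (hf : Function.Injective f) :
    (π.mapInj f hf).parts = π.parts.image (Finset.image f) := rfl

lemma Finpartition.mapInj_parts_card {s : Finset α} (π : Finpartition s) (f : α → β)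
    (hf : Function.Injective f) :
    (π.mapInj f hf).parts.card = π.parts.card :=
  Finset.card_image_of_injective _ (Finset.image_injective hf)

lemma Finpartition.prod_mapInj {R : Type*} [CommMonoid R] {s : Finset α} (π : Finpartition s)
    (f : α → β) (hf : Function.Injective f) (w : ℕ → R) :
    ∏ B ∈ (π.mapInj f hf).parts, w B.card = ∏ A ∈ π.parts, w A.card := by
  rw [Finpartition.mapInj_parts, Finset.prod_image]
  · exact Finset.prod_congr rfl fun A _ => by rw [Finset.card_image_of_injective _ hf]
  · intro A _ B _ h
    exact Finset.image_injective hf h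

/-- Pull a finpartition of `s.image f` back to `s`. -/
noncomputable def Finpartition.pullbackInj {s : Finset α} {f : α → β}
    (ρ : Finpartition (s.image f)) : Finpartition s where
  parts := ρ.parts.image (fun B => s.filter (fun a => f a ∈ B))
  supIndep := by
    rw [Finset.supIndep_iff_pairwiseDisjoint]
    rintro _ h1 _ h2 hne
    simp only [Finset.coe_image, Set.mem_image, Finset.mem_coe] at h1 h2
    obtain ⟨A, hA, rfl⟩ := h1
    obtain ⟨B, hB, rfl⟩ := h2
    have hAB : A ≠ B := fun h => hne (by rw [h])
    have hd := ρ.disjoint hA hB hAB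
    simp only [Function.onFun, id] at hd ⊢
    rw [Finset.disjoint_left] at hd ⊢
    intro a ha1 ha2
    simp only [Finset.mem_filter] at ha1 ha2
    exact hd ha1.2 ha2.2
  sup_parts := by
    ext a
    simp only [Finset.mem_sup, Finset.mem_image]
    constructor
    · rintro ⟨B, hB, hx⟩
      obtain ⟨A, hA, rfl⟩ := hB
      simp only [id, Finset.mem_filter] at hx
      exact hx.1
    · intro ha
      obtain ⟨B, hB, hfa⟩ := ρ.exists_mem (Finset.mem_image_of_mem f ha)
      exact ⟨s.filter (fun a => f a ∈ B), ⟨B, hB, rfl⟩, by simp [ha, hfa]⟩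
  bot_notMem := by
    simp only [Finset.bot_eq_empty, Finset.mem_image]
    rintro ⟨B, hB, h⟩
    obtain ⟨b, hb⟩ := ρ.nonempty_of_mem_parts hB
    have hbs : b ∈ s.image f := ρ.le hB hb
    obtain ⟨a, ha, rfl⟩ := Finset.mem_image.1 hbs
    have : a ∈ s.filter (fun a => f a ∈ B) := by simp [ha, hb]
    rw [h] at this
    exact absurd this (Finset.notMem_empty a)

lemma Finpartition.mapInj_pullbackInj {s : Finset α} {f : α → β} (hf : Function.Injective f)
    (ρ : Finpartition (s.image f)) : (ρ.pullbackInj).mapInj f hf = ρ := by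
  ext B
  simp only [mapInj_parts, pullbackInj, Finset.mem_image]
  constructor
  · rintro ⟨_, ⟨A, hA, rfl⟩, rfl⟩
    have : (s.filter (fun a => f a ∈ A)).image f = A := by
      ext b
      simp only [Finset.mem_image, Finset.mem_filter]
      constructor
      · rintro ⟨a, ⟨_, h⟩, rfl⟩; exact h
      · intro hb
        have : b ∈ s.image f := ρ.le hA hb
        obtain ⟨a, ha, rfl⟩ := Finset.mem_image.1 this
        exact ⟨a, ⟨ha, hb⟩, rfl⟩
    rwa [this]
  · intro hB
    refine ⟨s.filter (fun a => f a ∈ B), ⟨B, hB, rfl⟩, ?_⟩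
    ext b
    simp only [Finset.mem_image, Finset.mem_filter]
    constructor
    · rintro ⟨a, ⟨_, h⟩, rfl⟩; exact h
    · intro hb
      have : b ∈ s.image f := ρ.le hB hb
      obtain ⟨a, ha, rfl⟩ := Finset.mem_image.1 this
      exact ⟨a, ⟨ha, hb⟩, rfl⟩

lemma Finpartition.mapInj_injective {s : Finset α} (f : α → β) (hf : Function.Injective f) :
    Function.Injective (fun π : Finpartition s => π.mapInj f hf) := by
  intro π π' h
  ext A
  have := congrArg Finpartition.parts h
  simp only [mapInj_parts] at this
  have h2 := Finset.image_injective (Finset.image_injective hf) this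
  rw [h2]

/-- Transport of sums over all finpartitions along an injection. -/
lemma Finpartition.sum_mapInj {M : Type*} [AddCommMonoid M] {s : Finset α} {t : Finset β}
    (f : α → β) (hf : Function.Injective f) (hst : s.image f = t)
    (F : Finpartition t → M) :
    ∑ ρ : Finpartition t, F ρ = ∑ π : Finpartition s, F ((π.mapInj f hf).copy hst) := by
  subst hst
  have hbij : Function.Bijective (fun π : Finpartition s => π.mapInj f hf) :=
    ⟨Finpartition.mapInj_injective f hf, fun ρ => ⟨ρ.pullbackInj, Finpartition.mapInj_pullbackInj hf ρ⟩⟩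
  refine (Fintype.sum_bijective _ hbij _ _ fun π => ?_).symm
  rfl

/-- The canonical enumeration of a finset of a linear order, as an injection from `Fin`. -/
noncomputable def finsetEnum {β : Type*} [LinearOrder β] (s : Finset β) : Fin s.card → β :=
  fun i => (s.orderIsoOfFin rfl i : β)

lemma finsetEnum_injective {β : Type*} [LinearOrder β] (s : Finset β) :
    Function.Injective (finsetEnum s) := fun i j h => by
  have := (s.orderIsoOfFin rfl).injective (Subtype.ext h)
  exact this

lemma finsetEnum_image {β : Type*} [LinearOrder β] [DecidableEq β] (s : Finset β) :
    (univ : Finset (Fin s.card)).image (finsetEnum s) = s := by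
  ext b
  simp only [Finset.mem_image, Finset.mem_univ, true_and, finsetEnum]
  constructor
  · rintro ⟨i, rfl⟩; exact ((s.orderIsoOfFin rfl) i).2
  · intro hb
    exact ⟨(s.orderIsoOfFin rfl).symm ⟨b, hb⟩, by simp⟩

end Transport
section MuTheory
open scoped Classical
variable {R : Type*} [CommRing R] [Algebra ℚ R] {w : ℕ → R} {n : ℕ}

lemma zetaRel_self (hw : w 1 = 1) (π : Finpartition (univ : Finset (Fin n))) :
    zetaRel w π π = 1 := by
  have h : ∀ B ∈ π.parts, w ((π.parts.filter fun A => A ⊆ B).card) = 1 := by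
    intro B hB
    have : π.parts.filter (fun A => A ⊆ B) = {B} := by
      ext A
      simp only [Finset.mem_filter, Finset.mem_singleton]
      constructor
      · rintro ⟨hA, hAB⟩
        obtain ⟨a, ha⟩ := π.nonempty_of_mem_parts hA
        exact π.eq_of_mem_parts hA hB ha (hAB ha)
      · rintro rfl; exact ⟨hB, Finset.Subset.refl _⟩
    rw [this, Finset.card_singleton, hw]
  unfold zetaRel
  rw [Finset.prod_congr rfl h, Finset.prod_const_one]

lemma zetaRel_bot (w : ℕ → R) (ρ : Finpartition (univ : Finset (Fin n))) :
    zetaRel w ⊥ ρ = zetaWeight w ρ := by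
  unfold zetaRel zetaWeight
  refine Finset.prod_congr rfl fun B hB => ?_
  congr 1
  have h : (⊥ : Finpartition (univ : Finset (Fin n))).parts.filter (fun A => A ⊆ B)
      = B.map ⟨singleton, Finset.singleton_injective⟩ := by
    ext A
    simp only [Finpartition.parts_bot, Finset.mem_filter, Finset.mem_map,
      Function.Embedding.coeFn_mk]
    constructor
    · rintro ⟨⟨a, _, rfl⟩, hsub⟩
      exact ⟨a, by simpa using hsub, rfl⟩
    · rintro ⟨a, ha, rfl⟩
      exact ⟨⟨a, Finset.mem_univ a, rfl⟩, by simpa using ha⟩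
  rw [h, Finset.card_map]

lemma muW_self (w : ℕ → R) (π : Finpartition (univ : Finset (Fin n))) :
    muW w π π = 1 := by
  rw [muW, if_pos rfl]

lemma muW_rec (w : ℕ → R) {π σ : Finpartition (univ : Finset (Fin n))} (h : π ≠ σ) :
    muW w π σ = -∑ τ ∈ Finset.univ.filter (fun τ => π ≤ τ ∧ τ < σ),
      muW w π τ * zetaRel w τ σ := by
  rw [muW, if_neg h]
  congr 1
  rw [← Finset.sum_attach (Finset.univ.filter (fun τ => π ≤ τ ∧ τ < σ))
    (fun τ => muW w π τ * zetaRel w τ σ)]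

lemma sum_muW_mul_zetaRel (hw : w 1 = 1) (a b : Finpartition (univ : Finset (Fin n))) :
    ∑ τ : Finpartition (univ : Finset (Fin n)),
      (if a ≤ τ then muW w a τ else 0) * (if τ ≤ b then zetaRel w τ b else 0)
      = if a = b then 1 else 0 := by
  have key : ∀ τ : Finpartition (univ : Finset (Fin n)),
      (if a ≤ τ then muW w a τ else 0) * (if τ ≤ b then zetaRel w τ b else 0)
      = if a ≤ τ ∧ τ ≤ b then muW w a τ * zetaRel w τ b else 0 := by
    intro τ
    by_cases h1 : a ≤ τ <;> by_cases h2 : τ ≤ b <;> simp [h1, h2]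
  rw [Finset.sum_congr rfl (fun τ _ => key τ), Finset.sum_ite, Finset.sum_const_zero, add_zero]
  by_cases hab : a = b
  · subst hab
    have hfil : Finset.univ.filter (fun τ => a ≤ τ ∧ τ ≤ a) = {a} := by
      ext τ
      simp only [Finset.mem_filter, Finset.mem_univ, true_and, Finset.mem_singleton]
      exact ⟨fun h => le_antisymm h.2 h.1, fun h => by simp [h]⟩
    rw [hfil, Finset.sum_singleton, muW_self, zetaRel_self hw, one_mul, if_pos rfl]
  · rw [if_neg hab]
    by_cases hle : a ≤ b
    · have hfil : Finset.univ.filter (fun τ => a ≤ τ ∧ τ ≤ b)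
          = insert b (Finset.univ.filter (fun τ => a ≤ τ ∧ τ < b)) := by
        ext τ
        simp only [Finset.mem_filter, Finset.mem_univ, true_and, Finset.mem_insert]
        constructor
        · rintro ⟨h1, h2⟩
          rcases eq_or_lt_of_le h2 with h | h
          · exact Or.inl h
          · exact Or.inr ⟨h1, h⟩
        · rintro (rfl | ⟨h1, h2⟩)
          · exact ⟨hle, le_refl _⟩
          · exact ⟨h1, le_of_lt h2⟩
      have hb : b ∉ Finset.univ.filter (fun τ => a ≤ τ ∧ τ < b) := by simp
      rw [hfil, Finset.sum_insert hb, zetaRel_self hw, mul_one, muW_rec w hab, neg_add_cancel]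
    · have hfil : Finset.univ.filter (fun τ => a ≤ τ ∧ τ ≤ b) = ∅ := by
        ext τ
        simp only [Finset.mem_filter, Finset.mem_univ, true_and, Finset.notMem_empty, iff_false,
          not_and]
        intro h1 h2
        exact absurd (h1.trans h2) hle
      rw [hfil, Finset.sum_empty]

lemma sum_zetaRel_mul_muW (hw : w 1 = 1) (a b : Finpartition (univ : Finset (Fin n))) :
    ∑ τ : Finpartition (univ : Finset (Fin n)),
      (if a ≤ τ then zetaRel w a τ else 0) * (if τ ≤ b then muW w τ b else 0)
      = if a = b then 1 else 0 := by
  let M : Matrix (Finpartition (univ : Finset (Fin n))) (Finpartition (univ : Finset (Fin n))) R :=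
    fun x y => if x ≤ y then muW w x y else 0
  let Z : Matrix (Finpartition (univ : Finset (Fin n))) (Finpartition (univ : Finset (Fin n))) R :=
    fun x y => if x ≤ y then zetaRel w x y else 0
  have hMZ : M * Z = 1 := by
    ext x y
    rw [Matrix.mul_apply, Matrix.one_apply]
    exact sum_muW_mul_zetaRel hw x y
  have hZM : Z * M = 1 := mul_eq_one_comm.mp hMZ
  have h : (Z * M) a b = (1 : Matrix _ _ R) a b := by rw [hZM]
  rw [Matrix.mul_apply, Matrix.one_apply] at h
  exact h

lemma le_indiscrete (hne : (univ : Finset (Fin n)) ≠ ⊥) (ρ : Finpartition (univ : Finset (Fin n))) :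
    ρ ≤ Finpartition.indiscrete hne := by
  intro B hB
  refine ⟨univ, ?_, ρ.le hB⟩
  simp [Finpartition.indiscrete]

lemma bot_eq_indiscrete_iff (hne : (univ : Finset (Fin n)) ≠ ⊥) :
    ((⊥ : Finpartition (univ : Finset (Fin n))) = Finpartition.indiscrete hne) ↔ n = 1 := by
  constructor
  · intro h
    have h2 := congrArg (fun p : Finpartition (univ : Finset (Fin n)) => p.parts.card) h
    simp only [Finpartition.card_bot, Finpartition.indiscrete_parts, Finset.card_singleton,
      Finset.card_univ, Fintype.card_fin] at h2
    exact h2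
  · intro h
    subst h
    ext A
    simp only [Finpartition.parts_bot, Finset.mem_map, Function.Embedding.coeFn_mk,
      Finpartition.indiscrete_parts, Finset.mem_singleton]
    constructor
    · rintro ⟨a, _, rfl⟩
      apply Finset.eq_univ_of_card
      simp
    · rintro rfl
      have h1 : (univ : Finset (Fin 1)).card = 1 := by simp
      obtain ⟨a, ha⟩ := Finset.card_eq_one.mp h1
      exact ⟨a, Finset.mem_univ a, ha.symm⟩

lemma sum_zetaWeight_muW (hw : w 1 = 1) (hne : (univ : Finset (Fin n)) ≠ ⊥) :
    ∑ ρ : Finpartition (univ : Finset (Fin n)),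
      zetaWeight w ρ * muW w ρ (Finpartition.indiscrete hne)
      = if n = 1 then 1 else 0 := by
  have h := sum_zetaRel_mul_muW hw ⊥ (Finpartition.indiscrete hne)
  simp only [bot_eq_indiscrete_iff hne] at h
  rw [← h]
  refine Finset.sum_congr rfl fun τ _ => ?_
  rw [if_pos bot_le, if_pos (le_indiscrete hne τ), zetaRel_bot]

end MuTheory
section Blowup
open scoped Classical
variable {R : Type*} [CommRing R] [Algebra ℚ R] {n : ℕ}

/-- Enumeration of the parts of a finpartition. -/
noncomputable def pU (ρ : Finpartition (univ : Finset (Fin n))) (i : Fin ρ.parts.card) :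
    Finset (Fin n) := (ρ.parts.equivFin.symm i : Finset (Fin n))

variable (ρ : Finpartition (univ : Finset (Fin n)))

lemma pU_mem (i : Fin ρ.parts.card) : pU ρ i ∈ ρ.parts := (ρ.parts.equivFin.symm i).2

lemma pU_inj : Function.Injective (pU ρ) := fun i j h =>
  ρ.parts.equivFin.symm.injective (Subtype.coe_injective h)

lemma pU_nonempty (i : Fin ρ.parts.card) : (pU ρ i).Nonempty :=
  ρ.nonempty_of_mem_parts (pU_mem ρ i)

lemma pU_disj {i j : Fin ρ.parts.card} (h : i ≠ j) : Disjoint (pU ρ i) (pU ρ j) :=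
  ρ.disjoint (pU_mem ρ i) (pU_mem ρ j) (fun he => h (pU_inj ρ he))

lemma pU_surj {B : Finset (Fin n)} (hB : B ∈ ρ.parts) : ∃ i, pU ρ i = B :=
  ⟨ρ.parts.equivFin ⟨B, hB⟩, by simp [pU]⟩

lemma pU_cover (x : Fin n) : ∃ i, x ∈ pU ρ i := by
  obtain ⟨B, hB, hx⟩ := ρ.exists_mem (Finset.mem_univ x)
  obtain ⟨i, rfl⟩ := pU_surj ρ hB
  exact ⟨i, hx⟩

lemma pU_eq_of_mem {i j : Fin ρ.parts.card} {x : Fin n} (hi : x ∈ pU ρ i) (hj : x ∈ pU ρ j) :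
    i = j := by
  by_contra h
  exact Finset.disjoint_left.mp (pU_disj ρ h) hi hj

lemma keySub (A A' : Finset (Fin ρ.parts.card)) :
    A.biUnion (pU ρ) ⊆ A'.biUnion (pU ρ) ↔ A ⊆ A' := by
  constructor
  · intro h i hi
    obtain ⟨x, hx⟩ := pU_nonempty ρ i
    have hx2 : x ∈ A'.biUnion (pU ρ) := h (Finset.mem_biUnion.mpr ⟨i, hi, hx⟩)
    obtain ⟨j, hj, hxj⟩ := Finset.mem_biUnion.mp hx2
    rwa [pU_eq_of_mem ρ hx hxj]
  · intro h
    exact Finset.biUnion_subset_biUnion_of_subset_left _ h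

lemma keyInj : Function.Injective (fun A : Finset (Fin ρ.parts.card) => A.biUnion (pU ρ)) :=
  fun A A' h => Finset.Subset.antisymm ((keySub ρ _ _).mp h.le) ((keySub ρ _ _).mp h.ge)

/-- Blow up a partition of the index set of parts of `ρ` to a coarsening of `ρ`. -/
noncomputable def blow (a : Finpartition (univ : Finset (Fin ρ.parts.card))) :
    Finpartition (univ : Finset (Fin n)) where
  parts := a.parts.image (fun A => A.biUnion (pU ρ))
  supIndep := by
    rw [Finset.supIndep_iff_pairwiseDisjoint]
    rintro x hx y hy hxy
    simp only [Finset.coe_image, Set.mem_image, Finset.mem_coe] at hx hy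
    obtain ⟨A, hA, rfl⟩ := hx
    obtain ⟨A', hA', rfl⟩ := hy
    have hAA : A ≠ A' := fun h => hxy (by rw [h])
    have hd : Disjoint A A' := a.disjoint hA hA' hAA
    simp only [Function.onFun, id]
    rw [Finset.disjoint_biUnion_left]
    intro i hi
    rw [Finset.disjoint_biUnion_right]
    intro j hj
    refine pU_disj ρ ?_
    rintro rfl
    exact Finset.disjoint_left.mp hd hi hj
  sup_parts := by
    ext x
    simp only [Finset.mem_sup, Finset.mem_image, id_eq, Finset.mem_univ, iff_true]
    obtain ⟨i, hi⟩ := pU_cover ρ x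
    obtain ⟨A, hA, hiA⟩ := a.exists_mem (Finset.mem_univ i)
    exact ⟨A.biUnion (pU ρ), ⟨A, hA, rfl⟩, Finset.mem_biUnion.mpr ⟨i, hiA, hi⟩⟩
  bot_notMem := by
    simp only [Finset.bot_eq_empty, Finset.mem_image]
    rintro ⟨A, hA, h⟩
    obtain ⟨i, hi⟩ := a.nonempty_of_mem_parts hA
    obtain ⟨x, hx⟩ := pU_nonempty ρ i
    have hmem : x ∈ A.biUnion (pU ρ) := Finset.mem_biUnion.mpr ⟨i, hi, hx⟩
    rw [h] at hmem
    exact absurd hmem (Finset.notMem_empty x)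

@[simp] lemma blow_parts (a : Finpartition (univ : Finset (Fin ρ.parts.card))) :
    (blow ρ a).parts = a.parts.image (fun A => A.biUnion (pU ρ)) := rfl

lemma blow_mono (a b : Finpartition (univ : Finset (Fin ρ.parts.card))) :
    blow ρ a ≤ blow ρ b ↔ a ≤ b := by
  constructor
  · intro h A hA
    obtain ⟨C, hC, hsub⟩ :=
      h (show A.biUnion (pU ρ) ∈ (blow ρ a).parts from Finset.mem_image_of_mem _ hA)
    rw [blow_parts] at hC
    obtain ⟨A', hA', rfl⟩ := Finset.mem_image.mp hC
    exact ⟨A', hA', (keySub ρ _ _).mp hsub⟩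
  · intro h B hB
    rw [blow_parts] at hB
    obtain ⟨A, hA, rfl⟩ := Finset.mem_image.mp hB
    obtain ⟨A', hA', hsub⟩ := h hA
    exact ⟨A'.biUnion (pU ρ), Finset.mem_image_of_mem _ hA', (keySub ρ _ _).mpr hsub⟩

lemma blow_bot : blow ρ ⊥ = ρ := by
  ext B
  simp only [blow_parts, Finpartition.parts_bot, Finset.mem_image, Finset.mem_map,
    Function.Embedding.coeFn_mk]
  constructor
  · rintro ⟨A, ⟨i, _, rfl⟩, rfl⟩
    rw [Finset.singleton_biUnion]
    exact pU_mem ρ i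
  · intro hB
    obtain ⟨i, rfl⟩ := pU_surj ρ hB
    exact ⟨{i}, ⟨i, Finset.mem_univ i, rfl⟩, Finset.singleton_biUnion⟩

lemma blow_surj (τ : Finpartition (univ : Finset (Fin n))) (hτ : ρ ≤ τ) :
    ∃ a, blow ρ a = τ := by
  have hparts : ∀ B ∈ τ.parts, (univ.filter (fun i => pU ρ i ⊆ B)).biUnion (pU ρ) = B := by
    intro B hB
    apply Finset.Subset.antisymm
    · intro x hx
      obtain ⟨i, hi, hxi⟩ := Finset.mem_biUnion.mp hx
      exact (Finset.mem_filter.mp hi).2 hxi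
    · intro x hx
      obtain ⟨i, hxi⟩ := pU_cover ρ x
      obtain ⟨C, hC, hsub⟩ := hτ (pU_mem ρ i)
      have hBC : B = C := τ.eq_of_mem_parts hB hC hx (hsub hxi)
      refine Finset.mem_biUnion.mpr ⟨i, Finset.mem_filter.mpr ⟨Finset.mem_univ i, ?_⟩, hxi⟩
      rw [hBC]; exact hsub
  have hfilne : ∀ B ∈ τ.parts, (univ.filter (fun i => pU ρ i ⊆ B)).Nonempty := by
    intro B hB
    obtain ⟨x, hx⟩ := τ.nonempty_of_mem_parts hB
    obtain ⟨i, hxi⟩ := pU_cover ρ x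
    obtain ⟨C, hC, hsub⟩ := hτ (pU_mem ρ i)
    have hBC : B = C := τ.eq_of_mem_parts hB hC hx (hsub hxi)
    exact ⟨i, Finset.mem_filter.mpr ⟨Finset.mem_univ i, by rw [hBC]; exact hsub⟩⟩
  refine ⟨⟨τ.parts.image (fun B => univ.filter (fun i => pU ρ i ⊆ B)), ?_, ?_, ?_⟩, ?_⟩
  · rw [Finset.supIndep_iff_pairwiseDisjoint]
    rintro x hx y hy hxy
    simp only [Finset.coe_image, Set.mem_image, Finset.mem_coe] at hx hy
    obtain ⟨B, hB, rfl⟩ := hx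
    obtain ⟨B', hB', rfl⟩ := hy
    have hBB : B ≠ B' := fun h => hxy (by rw [h])
    simp only [Function.onFun, id]
    rw [Finset.disjoint_left]
    intro i hi1 hi2
    obtain ⟨x, hx⟩ := pU_nonempty ρ i
    exact hBB (τ.eq_of_mem_parts hB hB' ((Finset.mem_filter.mp hi1).2 hx)
      ((Finset.mem_filter.mp hi2).2 hx))
  · ext i
    simp only [Finset.mem_sup, Finset.mem_image, id_eq, Finset.mem_univ, iff_true]
    obtain ⟨C, hC, hsub⟩ := hτ (pU_mem ρ i)
    exact ⟨univ.filter (fun j => pU ρ j ⊆ C), ⟨C, hC, rfl⟩,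
      Finset.mem_filter.mpr ⟨Finset.mem_univ i, hsub⟩⟩
  · simp only [Finset.bot_eq_empty, Finset.mem_image]
    rintro ⟨B, hB, h⟩
    obtain ⟨i, hi⟩ := hfilne B hB
    rw [h] at hi
    exact absurd hi (Finset.notMem_empty i)
  · apply Finpartition.ext
    rw [blow_parts, Finset.image_image]
    calc τ.parts.image ((fun A => A.biUnion (pU ρ)) ∘ (fun B => univ.filter (fun i => pU ρ i ⊆ B)))
        = τ.parts.image id := Finset.image_congr (fun B hB => hparts B hB)
      _ = τ.parts := Finset.image_id

lemma blow_zeta (w : ℕ → R) (a b : Finpartition (univ : Finset (Fin ρ.parts.card))) :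
    zetaRel w (blow ρ a) (blow ρ b) = zetaRel w a b := by
  unfold zetaRel
  rw [blow_parts, Finset.prod_image (fun x _ y _ h => keyInj ρ h)]
  refine Finset.prod_congr rfl fun A' hA' => ?_
  congr 1
  rw [blow_parts, Finset.filter_image, Finset.card_image_of_injOn (fun x _ y _ h => keyInj ρ h)]
  congr 1
  apply Finset.filter_congr
  intro A hA
  simp only [keySub ρ A A']

lemma blow_top (h1 : (univ : Finset (Fin ρ.parts.card)) ≠ ⊥) (h2 : (univ : Finset (Fin n)) ≠ ⊥) :
    blow ρ (Finpartition.indiscrete h1) = Finpartition.indiscrete h2 := by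
  have huniv : (univ : Finset (Fin ρ.parts.card)).biUnion (pU ρ) = univ := by
    apply Finset.eq_univ_of_forall
    intro x
    obtain ⟨i, hi⟩ := pU_cover ρ x
    exact Finset.mem_biUnion.mpr ⟨i, Finset.mem_univ i, hi⟩
  ext B
  simp only [blow_parts, Finpartition.indiscrete_parts, Finset.image_singleton, huniv]

end Blowup

section MuTransport
open scoped Classical
variable {R : Type*} [CommRing R] [Algebra ℚ R] {n : ℕ}

lemma card_filter_lt_of_lt {m : ℕ} {a b : Finpartition (univ : Finset (Fin m))} (h : a < b) :
    (Finset.univ.filter fun τ => τ < a).card < (Finset.univ.filter fun τ => τ < b).card := by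
  apply Finset.card_lt_card
  constructor
  · intro x hx
    simp only [Finset.mem_filter, Finset.mem_univ, true_and] at hx ⊢
    exact hx.trans h
  · intro hsub
    have ha : a ∈ Finset.univ.filter fun x => x < b := by simp [h]
    have := hsub ha
    simp at this

lemma muW_transport {m : ℕ} (w : ℕ → R)
    (Φ : Finpartition (univ : Finset (Fin m)) → Finpartition (univ : Finset (Fin n)))
    (ρ : Finpartition (univ : Finset (Fin n)))
    (hmono : ∀ a b, Φ a ≤ Φ b ↔ a ≤ b)
    (hsurj : ∀ τ, ρ ≤ τ → ∃ a, Φ a = τ)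
    (hbot : Φ ⊥ = ρ)
    (hz : ∀ a b, zetaRel w (Φ a) (Φ b) = zetaRel w a b) :
    ∀ σ, muW w ⊥ σ = muW w ρ (Φ σ) := by
  have hinj : Function.Injective Φ := fun a b h =>
    le_antisymm ((hmono a b).mp (le_of_eq h)) ((hmono b a).mp (le_of_eq h.symm))
  have hlt : ∀ a b, Φ a < Φ b ↔ a < b := by
    intro a b
    rw [lt_iff_le_and_ne, lt_iff_le_and_ne, hmono, hinj.ne_iff]
  have hρle : ∀ a, ρ ≤ Φ a := fun a => hbot ▸ (hmono ⊥ a).mpr bot_le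
  suffices H : ∀ N (σ : Finpartition (univ : Finset (Fin m))),
      (Finset.univ.filter (fun τ => τ < σ)).card ≤ N → muW w ⊥ σ = muW w ρ (Φ σ) by
    intro σ; exact H _ σ le_rfl
  intro N
  induction N with
  | zero =>
    intro σ hσ
    have hσbot : σ = ⊥ := by
      by_contra h
      have : (⊥ : Finpartition (univ : Finset (Fin m))) ∈ Finset.univ.filter (fun τ => τ < σ) := by
        simp [lt_of_le_of_ne bot_le (Ne.symm h)]
      have := Finset.card_pos.mpr ⟨⊥, this⟩
      omega
    subst hσbot
    rw [muW_self, hbot, muW_self]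
  | succ N ih =>
    intro σ hσ
    by_cases hσbot : σ = ⊥
    · subst hσbot
      rw [muW_self, hbot, muW_self]
    · have hne2 : ρ ≠ Φ σ := by
        rw [← hbot]
        exact fun h => hσbot (hinj h).symm
      rw [muW_rec w (Ne.symm hσbot), muW_rec w hne2]
      congr 1
      have hfil : Finset.univ.filter (fun τ => ⊥ ≤ τ ∧ τ < σ)
          = Finset.univ.filter (fun τ => τ < σ) := by
        apply Finset.filter_congr
        intro τ _
        simp [bot_le]
      rw [hfil]
      refine Finset.sum_bij (fun τ' _ => Φ τ') ?_ ?_ ?_ ?_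
      · intro τ' hτ'
        simp only [Finset.mem_filter, Finset.mem_univ, true_and] at hτ' ⊢
        exact ⟨hρle τ', (hlt _ _).mpr hτ'⟩
      · intro x _ y _ h
        exact hinj h
      · intro τ hτ
        simp only [Finset.mem_filter, Finset.mem_univ, true_and] at hτ
        obtain ⟨a, rfl⟩ := hsurj τ hτ.1
        exact ⟨a, by simp [Finset.mem_filter, (hlt a σ).mp hτ.2], rfl⟩
      · intro τ' hτ'
        simp only [Finset.mem_filter, Finset.mem_univ, true_and] at hτ'
        have hcard : (Finset.univ.filter (fun τ => τ < τ')).card ≤ N := by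
          have := card_filter_lt_of_lt hτ'
          omega
        rw [ih τ' hcard, hz]
lemma univ_ne_bot {k : ℕ} (hk : k ≠ 0) : (univ : Finset (Fin k)) ≠ ⊥ := by
  have h : ((⟨0, Nat.pos_of_ne_zero hk⟩ : Fin k) ∈ (univ : Finset (Fin k))) := Finset.mem_univ _
  intro he
  rw [he] at h
  exact absurd h (Finset.notMem_empty _)

lemma muTop_eq (w : ℕ → R) {k : ℕ} (hk : k ≠ 0) (hne : (univ : Finset (Fin k)) ≠ ⊥) :
    muW w (⊥ : Finpartition (univ : Finset (Fin k))) (Finpartition.indiscrete hne)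
      = muTop w k := by
  obtain ⟨m, rfl⟩ := Nat.exists_eq_succ_of_ne_zero hk
  rfl

lemma muW_indiscrete (w : ℕ → R) (hne : (univ : Finset (Fin n)) ≠ ⊥)
    (ρ : Finpartition (univ : Finset (Fin n))) :
    muW w ρ (Finpartition.indiscrete hne) = muTop w ρ.parts.card := by
  have hk : ρ.parts.card ≠ 0 := Finset.card_ne_zero.mpr (ρ.parts_nonempty hne)
  have hne' : (univ : Finset (Fin ρ.parts.card)) ≠ ⊥ := univ_ne_bot hk
  have h := muW_transport w (blow ρ) ρ (blow_mono ρ) (blow_surj ρ) (blow_bot ρ) (blow_zeta ρ w)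
    (Finpartition.indiscrete hne')
  rw [blow_top ρ hne' hne] at h
  rw [← h, muTop_eq w hk hne']

lemma sum_zetaWeight_muTop {w : ℕ → R} (hw : w 1 = 1) (hne : (univ : Finset (Fin n)) ≠ ⊥) :
    ∑ ρ : Finpartition (univ : Finset (Fin n)), zetaWeight w ρ * muTop w ρ.parts.card
      = if n = 1 then 1 else 0 := by
  rw [← sum_zetaWeight_muW hw hne]
  exact Finset.sum_congr rfl fun ρ _ => by rw [muW_indiscrete w hne ρ]

lemma sum_zetaWeight_muTop_finset {w : ℕ → R} (hw : w 1 = 1) (C : Finset (Fin n))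
    (hC : C.Nonempty) :
    ∑ ρ : Finpartition C, (∏ B ∈ ρ.parts, w B.card) * muTop w ρ.parts.card
      = if C.card = 1 then 1 else 0 := by
  rw [Finpartition.sum_mapInj (finsetEnum C) (finsetEnum_injective C) (finsetEnum_image C)
    (fun ρ => (∏ B ∈ ρ.parts, w B.card) * muTop w ρ.parts.card)]
  have hk : C.card ≠ 0 := Finset.card_ne_zero.mpr hC
  have hne : (univ : Finset (Fin C.card)) ≠ ⊥ := univ_ne_bot hk
  rw [← sum_zetaWeight_muTop hw hne]
  refine Finset.sum_congr rfl fun π _ => ?_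
  have hparts : ((π.mapInj (finsetEnum C) (finsetEnum_injective C)).copy
      (finsetEnum_image C)).parts = (π.mapInj (finsetEnum C) (finsetEnum_injective C)).parts :=
    rfl
  rw [hparts, Finpartition.prod_mapInj, Finpartition.mapInj_parts_card]
  rfl

end MuTransport
section PolySide
open Polynomial
open scoped Classical
variable {R : Type*} [CommRing R] [Algebra ℚ R] {w : ℕ → R} {n : ℕ}

lemma aPoly_eq (w : ℕ → R) (m : ℕ) :
    aPoly w m = ∑ π : Finpartition (univ : Finset (Fin m)),
      Polynomial.C (zetaWeight w π) * Polynomial.X ^ π.parts.card := by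
  by_cases hm : m = 0
  · subst hm
    rw [aPoly, if_pos rfl]
    have hsub : ∀ π : Finpartition (univ : Finset (Fin 0)), π.parts = ∅ := fun π =>
      Finpartition.parts_eq_empty_iff.mpr (by simp)
    have hone : ∀ π : Finpartition (univ : Finset (Fin 0)),
        Polynomial.C (zetaWeight w π) * Polynomial.X ^ π.parts.card = 1 := by
      intro π
      unfold zetaWeight
      rw [hsub π]
      simp
    rw [Finset.sum_congr rfl (fun π _ => hone π), Finset.sum_const]
    have hcard : Fintype.card (Finpartition (univ : Finset (Fin 0))) = 1 := by
      rw [Fintype.card_eq_one_iff]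
      refine ⟨⊥, fun π => ?_⟩
      ext1
      rw [hsub π, hsub ⊥]
    rw [Finset.card_univ, hcard, one_smul]
  · rw [aPoly, if_neg hm]

lemma aPoly_natDegree_le (w : ℕ → R) (m : ℕ) : (aPoly w m).natDegree ≤ m := by
  rw [aPoly_eq]
  apply Polynomial.natDegree_sum_le_of_forall_le
  intro π _
  refine (Polynomial.natDegree_C_mul_le _ _).trans ((Polynomial.natDegree_X_pow_le _).trans ?_)
  have := π.card_parts_le_card
  simpa using this

lemma opOf_eq_sum_Icc (c : ℕ → R) (p : Polynomial R) {N : ℕ} (h : p.natDegree ≤ N) :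
    opOf c p = ∑ k ∈ Finset.Icc 1 N,
      (algebraMap ℚ R (1 / k.factorial) * c k) • (Polynomial.derivative^[k] p) := by
  unfold opOf
  apply Finset.sum_subset (Finset.Icc_subset_Icc_right h)
  intro k hk hk2
  simp only [Finset.mem_Icc] at hk hk2
  have hlt : p.natDegree < k := by omega
  rw [Polynomial.iterate_derivative_eq_zero hlt, smul_zero]

lemma alg_factorial_descFactorial (k m : ℕ) :
    algebraMap ℚ R (1 / k.factorial) * (m.descFactorial k : R) = (m.choose k : R) := by
  have h1 : ((m.descFactorial k : R)) = algebraMap ℚ R (m.descFactorial k : ℚ) := by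
    rw [map_natCast]
  rw [h1, ← map_mul]
  have h2 : (1 / k.factorial : ℚ) * (m.descFactorial k : ℚ) = (m.choose k : ℚ) := by
    rw [Nat.descFactorial_eq_factorial_mul_choose]
    have hk : (k.factorial : ℚ) ≠ 0 := Nat.cast_ne_zero.mpr k.factorial_ne_zero
    push_cast
    field_simp
  rw [h2, map_natCast]

lemma term_eq (a b : R) (k e m : ℕ) :
    (algebraMap ℚ R (1 / k.factorial) * b) •
        (Polynomial.C a * ((m.descFactorial k : Polynomial R) * Polynomial.X ^ e))
      = (m.choose k) • (Polynomial.C (a * b) * Polynomial.X ^ e) := by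
  rw [Polynomial.smul_eq_C_mul, nsmul_eq_mul]
  rw [show ((m.descFactorial k : Polynomial R)) = Polynomial.C ((m.descFactorial k : ℕ) : R) from
    (Polynomial.C_eq_natCast _).symm]
  rw [show ((m.choose k : Polynomial R)) = Polynomial.C ((m.choose k : ℕ) : R) from
    (Polynomial.C_eq_natCast _).symm]
  rw [show Polynomial.C (algebraMap ℚ R (1 / k.factorial) * b) *
      (Polynomial.C a * (Polynomial.C ((m.descFactorial k : ℕ) : R) * Polynomial.X ^ e))
      = Polynomial.C (algebraMap ℚ R (1 / k.factorial) * b * a * ((m.descFactorial k : ℕ) : R)) *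
        Polynomial.X ^ e by simp only [map_mul]; ring]
  rw [show Polynomial.C ((m.choose k : ℕ) : R) * (Polynomial.C (a * b) * Polynomial.X ^ e)
      = Polynomial.C (((m.choose k : ℕ) : R) * (a * b)) * Polynomial.X ^ e by
    simp only [map_mul]; ring]
  congr 1
  rw [← alg_factorial_descFactorial k m]
  ring

lemma sum_choose_smul {M : Type*} [AddCommMonoid M] {α : Type*} [DecidableEq α]
    (s : Finset α) (N : ℕ) (hN : s.card ≤ N) (g : ℕ → M) :
    ∑ k ∈ Finset.Icc 1 N, (s.card.choose k) • g k
      = ∑ S ∈ s.powerset.filter (fun S => S.Nonempty), g S.card := by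
  rw [← Finset.sum_fiberwise_of_maps_to (g := fun S : Finset α => S.card)
    (t := Finset.Icc 1 N) (fun S hS => ?_) (fun S => g S.card)]
  · refine Finset.sum_congr rfl fun k hk => ?_
    have hfil : (s.powerset.filter (fun S => S.Nonempty)).filter (fun S => S.card = k)
        = Finset.powersetCard k s := by
      ext S
      simp only [Finset.mem_filter, Finset.mem_powerset, Finset.mem_powersetCard]
      simp only [Finset.mem_Icc] at hk
      constructor
      · rintro ⟨⟨h1, _⟩, h3⟩
        exact ⟨h1, h3⟩
      · rintro ⟨h1, h2⟩
        refine ⟨⟨h1, ?_⟩, h2⟩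
        rw [← Finset.card_pos, h2]
        omega
    rw [hfil]
    have : ∀ S ∈ Finset.powersetCard k s, g S.card = g k := by
      intro S hS
      rw [(Finset.mem_powersetCard.mp hS).2]
    rw [Finset.sum_congr rfl this, Finset.sum_const, Finset.card_powersetCard]
  · simp only [Finset.mem_filter, Finset.mem_powerset] at hS
    simp only [Finset.mem_Icc]
    constructor
    · rw [Nat.one_le_iff_ne_zero, Finset.card_ne_zero]
      exact hS.2
    · exact le_trans (Finset.card_le_card hS.1) hN

lemma opOf_aPoly_expand (w : ℕ → R) :
    opOf (muTop w) (aPoly w n)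
      = ∑ π : Finpartition (univ : Finset (Fin n)),
          ∑ S ∈ π.parts.powerset.filter (fun S => S.Nonempty),
            Polynomial.C (zetaWeight w π * muTop w S.card) *
              Polynomial.X ^ (π.parts.card - S.card) := by
  rw [opOf_eq_sum_Icc _ _ (aPoly_natDegree_le w n)]
  have hstep : ∀ k ∈ Finset.Icc 1 n,
      (algebraMap ℚ R (1 / k.factorial) * muTop w k) • (Polynomial.derivative^[k] (aPoly w n))
      = ∑ π : Finpartition (univ : Finset (Fin n)),
          (π.parts.card.choose k) •
            (Polynomial.C (zetaWeight w π * muTop w k) * Polynomial.X ^ (π.parts.card - k)) := by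
    intro k _
    rw [aPoly_eq, Polynomial.iterate_derivative_sum, Finset.smul_sum]
    refine Finset.sum_congr rfl fun π _ => ?_
    rw [Polynomial.iterate_derivative_C_mul, Polynomial.iterate_derivative_X_pow_eq_natCast_mul]
    exact term_eq (zetaWeight w π) (muTop w k) k _ _
  rw [Finset.sum_congr rfl hstep, Finset.sum_comm]
  refine Finset.sum_congr rfl fun π _ => ?_
  have hcard : π.parts.card ≤ n := by
    have := π.card_parts_le_card
    simpa using this
  rw [sum_choose_smul _ n hcard]

end PolySide
section MergeSplit
open scoped Classical
variable {n : ℕ}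

/-- Merge a nonempty collection `S` of parts of `π` into a single part. -/
noncomputable def mergeParts (π : Finpartition (univ : Finset (Fin n)))
    (S : Finset (Finset (Fin n))) (hS : S ⊆ π.parts) (hSne : S.Nonempty) :
    Finpartition (univ : Finset (Fin n)) where
  parts := (π.parts \ S) ∪ {S.sup id}
  supIndep := by
    rw [Finset.supIndep_iff_pairwiseDisjoint]
    rintro x hx y hy hxy
    simp only [Finset.coe_union, Finset.coe_sdiff, Finset.coe_singleton, Set.mem_union,
      Set.mem_diff, Finset.mem_coe, Set.mem_singleton_iff] at hx hy
    have hdT : ∀ z ∈ π.parts, z ∉ S → Disjoint z (S.sup id) := by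
      intro z hz hzS
      rw [Finset.sup_eq_biUnion, Finset.disjoint_biUnion_right]
      intro A hA
      exact π.disjoint hz (hS hA) (fun h => hzS (h ▸ hA))
    rcases hx with ⟨hx1, hx2⟩ | rfl <;> rcases hy with ⟨hy1, hy2⟩ | rfl
    · exact π.disjoint hx1 hy1 hxy
    · exact hdT x hx1 hx2
    · exact (hdT y hy1 hy2).symm
    · exact absurd rfl hxy
  sup_parts := by
    rw [Finset.sup_union, Finset.sup_singleton]
    simp only [id_eq]
    rw [← Finset.sup_union, Finset.sdiff_union_of_subset hS, π.sup_parts]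
  bot_notMem := by
    simp only [Finset.mem_union, Finset.mem_sdiff, Finset.mem_singleton]
    rintro (⟨h1, _⟩ | h)
    · exact π.bot_notMem h1
    · obtain ⟨A, hA⟩ := hSne
      obtain ⟨a, ha⟩ := π.nonempty_of_mem_parts (hS hA)
      have : a ∈ S.sup id := Finset.mem_sup.mpr ⟨A, hA, ha⟩
      rw [← h] at this
      exact absurd this (Finset.notMem_empty a)

lemma mergeParts_parts (π : Finpartition (univ : Finset (Fin n)))
    (S : Finset (Finset (Fin n))) (hS : S ⊆ π.parts) (hSne : S.Nonempty) :
    (mergeParts π S hS hSne).parts = (π.parts \ S) ∪ {S.sup id} := rfl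

lemma sup_not_mem_sdiff (π : Finpartition (univ : Finset (Fin n)))
    (S : Finset (Finset (Fin n))) (hS : S ⊆ π.parts) (hSne : S.Nonempty) :
    S.sup id ∉ π.parts \ S := by
  rintro hT
  rw [Finset.mem_sdiff] at hT
  obtain ⟨A, hA⟩ := hSne
  have hAT : A ≤ S.sup id := Finset.le_sup (f := id) hA
  have hne : A ≠ S.sup id := fun h => hT.2 (h ▸ hA)
  have hdis : Disjoint A (S.sup id) := π.disjoint (hS hA) hT.1 hne
  have : A = ⊥ := Disjoint.eq_bot_of_le hdis hAT
  exact π.bot_notMem (this ▸ hS hA)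

lemma mergeParts_erase (π : Finpartition (univ : Finset (Fin n)))
    (S : Finset (Finset (Fin n))) (hS : S ⊆ π.parts) (hSne : S.Nonempty) :
    (mergeParts π S hS hSne).parts.erase (S.sup id) = π.parts \ S := by
  rw [mergeParts_parts, Finset.erase_union_distrib, Finset.erase_singleton,
    Finset.union_empty, Finset.erase_eq_of_notMem (sup_not_mem_sdiff π S hS hSne)]

lemma mergeParts_card (π : Finpartition (univ : Finset (Fin n)))
    (S : Finset (Finset (Fin n))) (hS : S ⊆ π.parts) (hSne : S.Nonempty) :
    (mergeParts π S hS hSne).parts.card = (π.parts.card - S.card) + 1 := by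
  rw [mergeParts_parts, Finset.card_union_of_disjoint, Finset.card_singleton,
    Finset.card_sdiff_of_subset hS]
  rw [Finset.disjoint_singleton_right]
  exact sup_not_mem_sdiff π S hS hSne

/-- Split one part `C = S.sup id` of `σ` into the parts in `S`. -/
noncomputable def splitParts (σ : Finpartition (univ : Finset (Fin n)))
    (S : Finset (Finset (Fin n))) (hsup : S.sup id ∈ σ.parts) (hdisj : S.SupIndep id)
    (hnb : ⊥ ∉ S) : Finpartition (univ : Finset (Fin n)) where
  parts := (σ.parts.erase (S.sup id)) ∪ S
  supIndep := by
    rw [Finset.supIndep_iff_pairwiseDisjoint]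
    rintro x hx y hy hxy
    simp only [Finset.coe_union, Set.mem_union, Finset.mem_coe, Finset.mem_erase] at hx hy
    have hsub : ∀ z ∈ S, z ≤ S.sup id := fun z hz => Finset.le_sup (f := id) hz
    rcases hx with ⟨hx1, hx2⟩ | hx <;> rcases hy with ⟨hy1, hy2⟩ | hy
    · exact σ.disjoint hx2 hy2 hxy
    · exact Finset.disjoint_of_subset_right (hsub y hy) (σ.disjoint hx2 hsup hx1)
    · exact Finset.disjoint_of_subset_left (hsub x hx) (σ.disjoint hsup hy2 (fun h => hy1 h.symm))
    · exact (Finset.supIndep_iff_pairwiseDisjoint.mp hdisj) hx hy hxy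
  sup_parts := by
    rw [Finset.sup_union]
    have h := σ.sup_parts
    rw [← Finset.insert_erase hsup, Finset.sup_insert] at h
    simp only [id_eq] at h
    rw [sup_comm]
    exact h
  bot_notMem := by
    simp only [Finset.mem_union, Finset.mem_erase]
    rintro (⟨_, h⟩ | h)
    · exact σ.bot_notMem h
    · exact hnb h

lemma splitParts_parts (σ : Finpartition (univ : Finset (Fin n)))
    (S : Finset (Finset (Fin n))) (hsup : S.sup id ∈ σ.parts) (hdisj : S.SupIndep id)
    (hnb : ⊥ ∉ S) :
    (splitParts σ S hsup hdisj hnb).parts = (σ.parts.erase (S.sup id)) ∪ S := rfl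

lemma erase_disjoint_S (σ : Finpartition (univ : Finset (Fin n)))
    (S : Finset (Finset (Fin n))) (hsup : S.sup id ∈ σ.parts) (hnb : ⊥ ∉ S) :
    Disjoint (σ.parts.erase (S.sup id)) S := by
  rw [Finset.disjoint_right]
  intro A hA hA2
  rw [Finset.mem_erase] at hA2
  have hAT : A ≤ S.sup id := Finset.le_sup (f := id) hA
  have : A = ⊥ := Disjoint.eq_bot_of_le (σ.disjoint hA2.2 hsup hA2.1) hAT
  exact hnb (this ▸ hA)

lemma splitParts_card (σ : Finpartition (univ : Finset (Fin n)))
    (S : Finset (Finset (Fin n))) (hsup : S.sup id ∈ σ.parts) (hdisj : S.SupIndep id)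
    (hnb : ⊥ ∉ S) :
    (splitParts σ S hsup hdisj hnb).parts.card = (σ.parts.card - 1) + S.card := by
  rw [splitParts_parts, Finset.card_union_of_disjoint (erase_disjoint_S σ S hsup hnb),
    Finset.card_erase_of_mem hsup]

lemma splitParts_sdiff (σ : Finpartition (univ : Finset (Fin n)))
    (S : Finset (Finset (Fin n))) (hsup : S.sup id ∈ σ.parts) (hdisj : S.SupIndep id)
    (hnb : ⊥ ∉ S) :
    (splitParts σ S hsup hdisj hnb).parts \ S = σ.parts.erase (S.sup id) := by
  rw [splitParts_parts, Finset.union_sdiff_right,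
    Finset.sdiff_eq_self_of_disjoint (erase_disjoint_S σ S hsup hnb)]

end MergeSplit
section Bij1
open Polynomial
open scoped Classical
variable {R : Type*} [CommRing R] [Algebra ℚ R] {n : ℕ}

lemma bij_one (w : ℕ → R) :
    (∑ π : Finpartition (univ : Finset (Fin n)),
      ∑ S ∈ π.parts.powerset.filter (fun S => S.Nonempty),
        Polynomial.C (zetaWeight w π * muTop w S.card) * Polynomial.X ^ (π.parts.card - S.card))
    = ∑ σ : Finpartition (univ : Finset (Fin n)),
        ∑ S ∈ (univ : Finset (Finset (Finset (Fin n)))).filter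
          (fun S => S.sup id ∈ σ.parts ∧ S.SupIndep id ∧ ⊥ ∉ S ∧ S.Nonempty),
          Polynomial.C ((∏ B ∈ σ.parts.erase (S.sup id), w B.card) *
            ((∏ A ∈ S, w A.card) * muTop w S.card)) * Polynomial.X ^ (σ.parts.card - 1) := by
  rw [← Finset.sum_finset_product' ((univ ×ˢ univ).filter
      (fun p : Finpartition (univ : Finset (Fin n)) × Finset (Finset (Fin n)) =>
        p.2 ⊆ p.1.parts ∧ p.2.Nonempty)) _ _
      (fun p => by simp [Finset.mem_powerset, and_assoc])]
  rw [← Finset.sum_finset_product' ((univ ×ˢ univ).filter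
      (fun p : Finpartition (univ : Finset (Fin n)) × Finset (Finset (Fin n)) =>
        p.2.sup id ∈ p.1.parts ∧ p.2.SupIndep id ∧ ⊥ ∉ p.2 ∧ p.2.Nonempty)) _ _
      (fun p => by simp [and_assoc])]
  refine Finset.sum_bij'
    (fun p hp => (mergeParts p.1 p.2 (Finset.mem_filter.mp hp).2.1
      (Finset.mem_filter.mp hp).2.2, p.2))
    (fun q hq => (splitParts q.1 q.2 (Finset.mem_filter.mp hq).2.1
      (Finset.mem_filter.mp hq).2.2.1 (Finset.mem_filter.mp hq).2.2.2.1, q.2))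
    ?_ ?_ ?_ ?_ ?_
  · -- hi : maps to
    intro p hp
    obtain ⟨hS, hSne⟩ := (Finset.mem_filter.mp hp).2
    rw [Finset.mem_filter]
    refine ⟨by simp, ?_, ?_, ?_, hSne⟩
    · rw [mergeParts_parts]
      exact Finset.mem_union_right _ (Finset.mem_singleton_self _)
    · exact p.1.supIndep.subset hS
    · exact fun h => p.1.bot_notMem (hS h)
  · -- hj
    intro q hq
    obtain ⟨hsup, hdisj, hnb, hne⟩ := (Finset.mem_filter.mp hq).2
    rw [Finset.mem_filter]
    refine ⟨by simp, ?_, hne⟩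
    rw [splitParts_parts]
    exact Finset.subset_union_right
  · -- left_inv
    intro p hp
    obtain ⟨hS, hSne⟩ := (Finset.mem_filter.mp hp).2
    refine Prod.ext (Finpartition.ext ?_) rfl
    rw [splitParts_parts, mergeParts_erase, Finset.sdiff_union_of_subset hS]
  · -- right_inv
    intro q hq
    obtain ⟨hsup, hdisj, hnb, hne⟩ := (Finset.mem_filter.mp hq).2
    refine Prod.ext (Finpartition.ext ?_) rfl
    rw [mergeParts_parts, splitParts_sdiff, Finset.union_comm, ← Finset.insert_eq,
      Finset.insert_erase hsup]
  · -- values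
    intro p hp
    obtain ⟨hS, hSne⟩ := (Finset.mem_filter.mp hp).2
    have h1 : (mergeParts p.1 p.2 hS hSne).parts.erase (p.2.sup id) = p.1.parts \ p.2 :=
      mergeParts_erase p.1 p.2 hS hSne
    have h2 : (mergeParts p.1 p.2 hS hSne).parts.card - 1 = p.1.parts.card - p.2.card := by
      rw [mergeParts_card]
      omega
    have h3 : zetaWeight w p.1 = (∏ B ∈ p.1.parts \ p.2, w B.card) * ∏ A ∈ p.2, w A.card := by
      rw [zetaWeight, ← Finset.prod_sdiff hS]
    rw [h1, h2, h3, mul_assoc]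

end Bij1
section Bij2
open Polynomial
open scoped Classical
variable {R : Type*} [CommRing R] [Algebra ℚ R] {n : ℕ}

/-- Repackage a set of sets as a finpartition of its union. -/
noncomputable def toPartition (C : Finset (Fin n)) (S : Finset (Finset (Fin n)))
    (h1 : S.SupIndep id) (h2 : S.sup id = C) (h3 : ⊥ ∉ S) : Finpartition C :=
  ⟨S, h1, h2, h3⟩

lemma toPartition_parts (C : Finset (Fin n)) (S : Finset (Finset (Fin n)))
    (h1 : S.SupIndep id) (h2 : S.sup id = C) (h3 : ⊥ ∉ S) :
    (toPartition C S h1 h2 h3).parts = S := rfl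

lemma inner_to_rho (w : ℕ → R) (σ : Finpartition (univ : Finset (Fin n))) :
    ∑ S ∈ (univ : Finset (Finset (Finset (Fin n)))).filter
        (fun S => S.sup id ∈ σ.parts ∧ S.SupIndep id ∧ ⊥ ∉ S ∧ S.Nonempty),
      Polynomial.C ((∏ B ∈ σ.parts.erase (S.sup id), w B.card) *
        ((∏ A ∈ S, w A.card) * muTop w S.card)) * Polynomial.X ^ (σ.parts.card - 1)
    = ∑ C ∈ σ.parts, ∑ ρ : Finpartition C,
        Polynomial.C ((∏ B ∈ σ.parts.erase C, w B.card) *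
          ((∏ A ∈ ρ.parts, w A.card) * muTop w ρ.parts.card)) *
          Polynomial.X ^ (σ.parts.card - 1) := by
  rw [← Finset.sum_fiberwise_of_maps_to (g := fun S : Finset (Finset (Fin n)) => S.sup id)
    (t := σ.parts) (fun S hS => (Finset.mem_filter.mp hS).2.1)]
  refine Finset.sum_congr rfl fun C hC => ?_
  refine Finset.sum_bij'
    (fun S hS => toPartition C S
      (Finset.mem_filter.mp (Finset.mem_filter.mp hS).1).2.2.1
      (Finset.mem_filter.mp hS).2
      (Finset.mem_filter.mp (Finset.mem_filter.mp hS).1).2.2.2.1)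
    (fun ρ _ => ρ.parts) ?_ ?_ ?_ ?_ ?_
  · intro S hS
    exact Finset.mem_univ _
  · intro ρ _
    have hCne : C ≠ ⊥ := σ.ne_bot hC
    rw [Finset.mem_filter, Finset.mem_filter]
    refine ⟨⟨Finset.mem_univ _, ?_, ρ.supIndep, ρ.bot_notMem, ?_⟩, ρ.sup_parts⟩
    · rw [ρ.sup_parts]; exact hC
    · exact ρ.parts_nonempty hCne
  · intro S hS
    rfl
  · intro ρ _
    rfl
  · intro S hS
    have hsup : S.sup id = C := (Finset.mem_filter.mp hS).2
    rw [toPartition_parts, hsup]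

lemma rho_sum_eval {w : ℕ → R} (hw : w 1 = 1) (σ : Finpartition (univ : Finset (Fin n)))
    (C : Finset (Fin n)) (hC : C ∈ σ.parts) :
    ∑ ρ : Finpartition C,
        Polynomial.C ((∏ B ∈ σ.parts.erase C, w B.card) *
          ((∏ A ∈ ρ.parts, w A.card) * muTop w ρ.parts.card)) *
          Polynomial.X ^ (σ.parts.card - 1)
    = if C.card = 1 then
        Polynomial.C (∏ B ∈ σ.parts.erase C, w B.card) * Polynomial.X ^ (σ.parts.card - 1)
      else 0 := by
  rw [← Finset.sum_mul, ← map_sum, ← Finset.mul_sum,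
    sum_zetaWeight_muTop_finset hw C (σ.nonempty_of_mem_parts hC)]
  split_ifs with h
  · rw [mul_one]
  · rw [mul_zero, map_zero, zero_mul]

noncomputable def singletonElt {α : Type*} {C : Finset α} (h : C.card = 1) : α :=
  (Finset.card_eq_one.mp h).choose

lemma singletonElt_spec {α : Type*} {C : Finset α} (h : C.card = 1) : C = {singletonElt h} :=
  (Finset.card_eq_one.mp h).choose_spec

lemma singletonElt_eq' {α : Type*} {C : Finset α} (h : C.card = 1) {a : α} (ha : C = {a}) :
    singletonElt h = a := by
  have hs : ({a} : Finset α) = {singletonElt h} := ha.symm.trans (singletonElt_spec h)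
  exact (Finset.singleton_inj.mp hs).symm

/-- Remove one part from a finpartition. -/
noncomputable def removePart (σ : Finpartition (univ : Finset (Fin n))) {C : Finset (Fin n)}
    (hC : C ∈ σ.parts) : Finpartition ((univ : Finset (Fin n)) \ C) where
  parts := σ.parts.erase C
  supIndep := σ.supIndep.subset (Finset.erase_subset _ _)
  sup_parts := by
    apply Finset.Subset.antisymm
    · intro x hx
      rw [Finset.mem_sup] at hx
      obtain ⟨B, hB, hxB⟩ := hx
      rw [Finset.mem_erase] at hB
      rw [Finset.mem_sdiff]
      refine ⟨Finset.mem_univ _, fun hxC => ?_⟩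
      exact hB.1 (σ.eq_of_mem_parts hB.2 hC hxB hxC)
    · intro x hx
      rw [Finset.mem_sdiff] at hx
      obtain ⟨B, hB, hxB⟩ := σ.exists_mem (Finset.mem_univ x)
      have hBC : B ≠ C := fun h => hx.2 (h ▸ hxB)
      rw [Finset.mem_sup]
      exact ⟨B, Finset.mem_erase.mpr ⟨hBC, hB⟩, hxB⟩
  bot_notMem := fun h => σ.bot_notMem (Finset.erase_subset _ _ h)

/-- Add a singleton part to a finpartition of the complement. -/
noncomputable def addSingleton (t : Fin n) (π' : Finpartition ((univ : Finset (Fin n)).erase t)) :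
    Finpartition (univ : Finset (Fin n)) where
  parts := insert {t} π'.parts
  supIndep := by
    rw [Finset.supIndep_iff_pairwiseDisjoint]
    rintro x hx y hy hxy
    simp only [Finset.coe_insert, Set.mem_insert_iff, Finset.mem_coe] at hx hy
    have hnt : ∀ B ∈ π'.parts, Disjoint ({t} : Finset (Fin n)) B := by
      intro B hB
      rw [Finset.disjoint_singleton_left]
      intro htB
      exact absurd (π'.le hB htB) (Finset.notMem_erase t univ)
    rcases hx with rfl | hx <;> rcases hy with rfl | hy
    · exact absurd rfl hxy
    · exact hnt y hy
    · exact (hnt x hx).symm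
    · exact π'.disjoint hx hy hxy
  sup_parts := by
    rw [Finset.sup_insert, π'.sup_parts]
    simp only [id_eq, Finset.sup_eq_union]
    rw [← Finset.insert_eq, Finset.insert_erase (Finset.mem_univ t)]
  bot_notMem := by
    simp only [Finset.mem_insert]
    rintro (h | h)
    · exact absurd h.symm (Finset.singleton_ne_empty t)
    · exact π'.bot_notMem h

lemma singleton_not_mem_parts (t : Fin n) (π' : Finpartition ((univ : Finset (Fin n)).erase t)) :
    ({t} : Finset (Fin n)) ∉ π'.parts := by
  intro h
  exact absurd (π'.le h (Finset.mem_singleton_self t)) (Finset.notMem_erase t univ)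

lemma finpart_heq {s s' : Finset (Fin n)} (h : s = s') (a : Finpartition s) (b : Finpartition s')
    (hp : a.parts = b.parts) : HEq a b := by
  subst h
  exact heq_of_eq (Finpartition.ext hp)

lemma bij_two (w : ℕ → R) :
    (∑ σ : Finpartition (univ : Finset (Fin n)),
      ∑ C ∈ σ.parts.filter (fun C => C.card = 1),
        Polynomial.C (∏ B ∈ σ.parts.erase C, w B.card) * Polynomial.X ^ (σ.parts.card - 1))
    = ∑ t : Fin n, ∑ π' : Finpartition ((univ : Finset (Fin n)).erase t),
        Polynomial.C (∏ B ∈ π'.parts, w B.card) * Polynomial.X ^ π'.parts.card := by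
  rw [Finset.sum_sigma' (Finset.univ)
    (fun σ : Finpartition (univ : Finset (Fin n)) => σ.parts.filter (fun C => C.card = 1))
    (fun σ C => Polynomial.C (∏ B ∈ σ.parts.erase C, w B.card) *
      Polynomial.X ^ (σ.parts.card - 1))]
  rw [Finset.sum_sigma' (Finset.univ)
    (fun t : Fin n => (Finset.univ : Finset (Finpartition ((univ : Finset (Fin n)).erase t))))
    (fun t π' => Polynomial.C (∏ B ∈ π'.parts, w B.card) * Polynomial.X ^ π'.parts.card)]
  refine Finset.sum_bij'
    (fun x hx => ⟨singletonElt (Finset.mem_filter.mp (Finset.mem_sigma.mp hx).2).2,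
      (removePart x.1 (Finset.mem_filter.mp (Finset.mem_sigma.mp hx).2).1).copy (by
        rw [Finset.erase_eq]
        exact congrArg (fun z => univ \ z) (singletonElt_spec _))⟩)
    (fun y _ => ⟨addSingleton y.1 y.2, {y.1}⟩) ?_ ?_ ?_ ?_ ?_
  · intro x hx
    exact Finset.mem_sigma.mpr ⟨Finset.mem_univ _, Finset.mem_univ _⟩
  · intro y hy
    refine Finset.mem_sigma.mpr ⟨Finset.mem_univ _, Finset.mem_filter.mpr ⟨?_, ?_⟩⟩
    · exact Finset.mem_insert_self _ _
    · exact Finset.card_singleton _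
  · -- left_inv : j (i x) = x
    intro x hx
    obtain ⟨hmem, hcard⟩ := Finset.mem_filter.mp (Finset.mem_sigma.mp hx).2
    refine Sigma.ext ?_ ?_
    · -- addSingleton (singletonElt ..) (copy ..) = x.1
      apply Finpartition.ext
      show insert {singletonElt hcard} (x.1.parts.erase x.2) = x.1.parts
      rw [← singletonElt_spec hcard, Finset.insert_erase hmem]
    · -- {singletonElt ..} = x.2
      exact heq_of_eq (singletonElt_spec hcard).symm
  · -- right_inv : i (j y) = y
    intro y hy
    refine Sigma.ext ?_ ?_
    · exact singletonElt_eq' (Finset.card_singleton _) rfl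
    · refine finpart_heq (congrArg (Finset.erase univ) (singletonElt_eq' (Finset.card_singleton _) rfl)) _ _ ?_
      show (insert {y.1} y.2.parts).erase {y.1} = y.2.parts
      rw [Finset.erase_insert (singleton_not_mem_parts y.1 y.2)]
  · -- values
    intro x hx
    obtain ⟨hmem, hcard⟩ := Finset.mem_filter.mp (Finset.mem_sigma.mp hx).2
    have h1 : ∀ (hpf : (univ : Finset (Fin n)) \ x.2
          = univ.erase (singletonElt hcard)),
        ((removePart x.1 hmem).copy hpf).parts = x.1.parts.erase x.2 := fun _ => rfl
    rw [h1]
    congr 1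
    rw [Finset.card_erase_of_mem hmem]

lemma sum_partitions_prod (w : ℕ → R) (s : Finset (Fin n)) :
    ∑ π' : Finpartition s,
        Polynomial.C (∏ B ∈ π'.parts, w B.card) * Polynomial.X ^ π'.parts.card
      = aPoly w s.card := by
  rw [aPoly_eq, Finpartition.sum_mapInj (finsetEnum s) (finsetEnum_injective s)
    (finsetEnum_image s)
    (fun ρ => Polynomial.C (∏ B ∈ ρ.parts, w B.card) * Polynomial.X ^ ρ.parts.card)]
  refine Finset.sum_congr rfl fun π _ => ?_
  have h1 : ((π.mapInj (finsetEnum s) (finsetEnum_injective s)).copy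
      (finsetEnum_image s)).parts = (π.mapInj (finsetEnum s) (finsetEnum_injective s)).parts :=
    rfl
  rw [h1, Finpartition.prod_mapInj, Finpartition.mapInj_parts_card]
  rfl

end Bij2

/-- The zeta-type enumerators form the basic sequence of
`Δ = ∑_{k ≥ 1} (µ^w_k / k!) D^k`:  `a_n(0; w) = 0` and `Δ a_n = n a_{n-1}` for `n ≥ 1`. -/
theorem aPoly_basic (w : ℕ → R) (hw : w 1 = 1) :
    (∀ n : ℕ, 1 ≤ n → (aPoly w n).eval (0 : R) = 0) ∧
    (∀ n : ℕ, 1 ≤ n → opOf (muTop w) (aPoly w n) = (n : R) • aPoly w (n - 1)) := by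
  classical
  constructor
  · intro n hn
    rw [aPoly_eq, Polynomial.eval_finset_sum]
    apply Finset.sum_eq_zero
    intro π _
    rw [Polynomial.eval_mul, Polynomial.eval_C, Polynomial.eval_pow, Polynomial.eval_X]
    have hne : (univ : Finset (Fin n)) ≠ ⊥ := univ_ne_bot (by omega)
    have hpos : π.parts.card ≠ 0 := Finset.card_ne_zero.mpr (π.parts_nonempty hne)
    rw [zero_pow hpos, mul_zero]
  · intro n hn
    rw [opOf_aPoly_expand w, bij_one w]
    rw [Finset.sum_congr rfl (fun σ _ => inner_to_rho w σ)]
    rw [Finset.sum_congr rfl (fun σ _ =>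
      Finset.sum_congr rfl (fun C hC => rho_sum_eval hw σ C hC))]
    rw [Finset.sum_congr rfl (fun σ _ => (Finset.sum_filter _ _).symm)]
    rw [bij_two w]
    rw [Finset.sum_congr rfl (fun t _ => sum_partitions_prod w (univ.erase t))]
    have hcard : ∀ t : Fin n, ((univ : Finset (Fin n)).erase t).card = n - 1 := by
      intro t
      rw [Finset.card_erase_of_mem (Finset.mem_univ t), Finset.card_univ, Fintype.card_fin]
    rw [Finset.sum_congr rfl (fun t _ => by rw [hcard t])]
    rw [Finset.sum_const, Finset.card_univ, Fintype.card_fin, Nat.cast_smul_eq_nsmul]
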